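/- Let X = (X_n)_{n≥1} be a process with distribution μ on ℝ^ℕ that has a strong ℓp-characterization with constant limiting function f_{p,μ}. If f_{p,μ}(r₀) = 0 for some r₀ ∈ (0,1], then for every ε ∈ (0,1) and every d ∈ (0,1), r_p(d,ε,μ) ≤ r̃⁺_p(d,ε,μ) ≤ r₀. -/

import Mathlib

open MeasureTheory Filter Set
open scoped ENNReal Topology Classical

noncomputable section

/-- Left shift on real sequences. -/
def shift : (ℕ → ℝ) → (ℕ → ℝ) := fun x n => x (n + 1)

/-- First `n` coordinates of a sequence. -/
def proj (n : ℕ) (x : ℕ → ℝ) : Fin n → ℝ := fun i => x i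

/-- Best `k`-term `ℓp`-approximation error of `x ∈ ℝ^n`. -/
def sigmaP (p : ℝ) (n k : ℕ) (x : Fin n → ℝ) : ℝ :=
  sInf {e : ℝ | ∃ S : Finset (Fin n), S.card = k ∧ e = (∑ i ∈ Sᶜ, |x i| ^ p) ^ (1 / p)}

/-- Relative best `k`-term `ℓp`-approximation error. -/
def sigmaTilde (p : ℝ) (n k : ℕ) (x : Fin n → ℝ) : ℝ :=
  sigmaP p n k x / (∑ i, |x i| ^ p) ^ (1 / p)

/-- The set `A^{n,k}_d` of vectors with relative approximation error at most `d`. -/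
def Ad (p : ℝ) (n k : ℕ) (d : ℝ) : Set (Fin n → ℝ) := {x | sigmaTilde p n k x ≤ d}

/-- `μ_n`: law of the first `n` coordinates. -/
def lawn (μ : Measure (ℕ → ℝ)) (n : ℕ) : Measure (Fin n → ℝ) := μ.map (proj n)

/-- Strong `ℓp`-characterization with constant limiting function `f : (0,1] → [0,1]`. -/
def StrongLpChar (p : ℝ) (μ : Measure (ℕ → ℝ)) (f : ℝ → ℝ) : Prop :=
  (∀ r ∈ Set.Ioc (0:ℝ) 1, f r ∈ Set.Icc (0:ℝ) 1) ∧
  ∀ r ∈ Set.Ioc (0:ℝ) 1, ∀ k : ℕ → ℕ,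
    Tendsto (fun n : ℕ => (k n : ℝ) / n) atTop (𝓝 r) →
    ∀ᵐ x ∂μ, Tendsto (fun n : ℕ => sigmaTilde p n (k n) (proj n x)) atTop (𝓝 (f r))

/-- `κ̃_p(d, ε, μ_n)`. -/
def kappaP (p : ℝ) (μ : Measure (ℕ → ℝ)) (d ε : ℝ) (n : ℕ) : ℕ :=
  sInf {k : ℕ | 1 ≤ k ∧ k ≤ n ∧ 1 - ε ≤ (lawn μ n (Ad p n k d)).toReal}

/-- `r̃⁺_p(d, ε, μ)`. -/
def rTildePlus (p : ℝ) (μ : Measure (ℕ → ℝ)) (d ε : ℝ) : ℝ :=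
  Filter.limsup (fun n : ℕ => (kappaP p μ d ε n : ℝ) / n) atTop

/-- `r̃⁻_p(d, ε, μ)`. -/
def rTildeMinus (p : ℝ) (μ : Measure (ℕ → ℝ)) (d ε : ℝ) : ℝ :=
  Filter.liminf (fun n : ℕ => (kappaP p μ d ε n : ℝ) / n) atTop

/-- `(r, d)` is `ℓp`-achievable with probability `ε`. -/
def Achievable (p : ℝ) (μ : Measure (ℕ → ℝ)) (d ε r : ℝ) : Prop :=
  ∃ k : ℕ → ℕ, Filter.limsup (fun n : ℕ => (k n : ℝ) / n) atTop ≤ r ∧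
    1 - ε ≤ Filter.liminf (fun n : ℕ => (lawn μ n (Ad p n (k n) d)).toReal) atTop

/-- `r_p(d, ε, μ)`: the rate-approximation error function. -/
def rOp (p : ℝ) (μ : Measure (ℕ → ℝ)) (d ε : ℝ) : ℝ :=
  sInf {r : ℝ | r ∈ Set.Icc (0:ℝ) 1 ∧ Achievable p μ d ε r}

/-- `μ` is AMS with stationary mean `ν`. -/
def HasStationaryMean (μ ν : Measure (ℕ → ℝ)) : Prop :=
  ∀ F : Set (ℕ → ℝ), MeasurableSet F →
    Tendsto (fun n : ℕ => (∑ i ∈ Finset.range n, (μ (shift^[i] ⁻¹' F)).toReal) / n)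
      atTop (𝓝 (ν F).toReal)

/-- `μ` is asymptotically mean stationary. -/
def IsAMS (μ : Measure (ℕ → ℝ)) : Prop :=
  ∀ F : Set (ℕ → ℝ), MeasurableSet F →
    ∃ L : ℝ, Tendsto (fun n : ℕ => (∑ i ∈ Finset.range n, (μ (shift^[i] ⁻¹' F)).toReal) / n)
      atTop (𝓝 L)

/-- `ν` is stationary with respect to the shift. -/
def IsStationaryShift (ν : Measure (ℕ → ℝ)) : Prop :=
  ∀ F : Set (ℕ → ℝ), MeasurableSet F → ν (shift ⁻¹' F) = ν F

/-- `μ` is ergodic with respect to the shift. -/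
def IsErgodicShift (μ : Measure (ℕ → ℝ)) : Prop :=
  ∀ F : Set (ℕ → ℝ), MeasurableSet F → shift ⁻¹' F = F → μ F = 0 ∨ μ F = 1

/-- 1D marginal: the law of the first coordinate. -/
def marginal1 (ν : Measure (ℕ → ℝ)) : Measure ℝ := ν.map (fun x => x 0)

/-- The `p`-th absolute moment `∫ |x|^p dν` (as an extended real). -/
def momentP (p : ℝ) (ν : Measure ℝ) : ℝ≥0∞ := ∫⁻ x, ENNReal.ofReal (|x| ^ p) ∂ν

/-- Tail set `B_τ = (−∞,−τ] ∪ [τ,∞)`. -/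
def Btau (τ : ℝ) : Set ℝ := Set.Iic (-τ) ∪ Set.Ici τ

/-- Tail set `C_τ = (−∞,−τ) ∪ (τ,∞)`. -/
def Ctau (τ : ℝ) : Set ℝ := Set.Iio (-τ) ∪ Set.Ioi τ

/-- Tail distribution function `φ_ν(τ) = ν(B_τ)`. -/
def phiTail (ν : Measure ℝ) (τ : ℝ) : ℝ := (ν (Btau τ)).toReal

/-- `v_p(B) = (∫_B |x|^p dν) / (∫_ℝ |x|^p dν)`. -/
def vP (p : ℝ) (ν : Measure ℝ) (B : Set ℝ) : ℝ :=
  ((∫⁻ x in B, ENNReal.ofReal (|x| ^ p) ∂ν) / momentP p ν).toReal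

/-- The rate vs approximation error graph `F_ν`. -/
def Fgraph (p : ℝ) (ν : Measure ℝ) : Set (ℝ × ℝ) :=
  {q | ∃ τ : ℝ, 0 ≤ τ ∧ q = (phiTail ν τ, (1 - vP p ν (Btau τ)) ^ (1 / p))} ∪
  {q | ∃ τ : ℝ, 0 ≤ τ ∧ 0 < (ν ({-τ, τ} : Set ℝ)).toReal ∧
       ∃ α ∈ Set.Ico (0:ℝ) 1,
         q = ((ν (Ctau τ)).toReal + α * (ν ({-τ, τ} : Set ℝ)).toReal,
              (1 - vP p ν (Ctau τ) - α * vP p ν ({-τ, τ} : Set ℝ)) ^ (1 / p))}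

/-- Approximation error function `f_{p,ν} : (0,1] → [0,1)`, defined through its graph `F_ν`,
with the convention `f_{p,ν} ≡ 0` when the `p`-th moment of `ν` is infinite. -/
def fApprox (p : ℝ) (ν : Measure ℝ) (r : ℝ) : ℝ :=
  if momentP p ν = ∞ then 0 else sSup {d : ℝ | (r, d) ∈ Fgraph p ν}


/-- `proj n` is measurable. -/
lemma measurable_proj' (n : ℕ) : Measurable (proj n) :=
  measurable_pi_lambda _ fun _ => measurable_pi_apply _

lemma continuous_sigmaP (p : ℝ) (hp : 0 < p) (n k : ℕ) : Continuous (sigmaP p n k) := by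
  classical
  set T : Finset (Finset (Fin n)) := Finset.univ.filter (fun S => S.card = k) with hT
  have hset : ∀ x : Fin n → ℝ,
      {e : ℝ | ∃ S : Finset (Fin n), S.card = k ∧ e = (∑ i ∈ Sᶜ, |x i| ^ p) ^ (1 / p)}
      = (fun S : Finset (Fin n) => (∑ i ∈ Sᶜ, |x i| ^ p) ^ (1 / p)) '' ↑T := by
    intro x; ext e
    simp only [hT, Set.mem_setOf_eq, Set.mem_image, Finset.coe_filter, Finset.mem_univ,
      true_and, Set.mem_setOf_eq]
    constructor
    · rintro ⟨S, hS, rfl⟩; exact ⟨S, hS, rfl⟩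
    · rintro ⟨S, hS, rfl⟩; exact ⟨S, hS, rfl⟩
  have hcont : ∀ S : Finset (Fin n),
      Continuous (fun x : Fin n → ℝ => (∑ i ∈ Sᶜ, |x i| ^ p) ^ (1 / p)) := by
    intro S
    exact (Real.continuous_rpow_const (by positivity)).comp
      (continuous_finset_sum _ fun i _ =>
        (Real.continuous_rpow_const hp.le).comp (continuous_apply i).abs)
  by_cases hne : T.Nonempty
  · have heq : sigmaP p n k
        = fun x => T.inf' hne (fun S => (∑ i ∈ Sᶜ, |x i| ^ p) ^ (1 / p)) := by
      funext x
      rw [sigmaP, hset, ← Finset.inf'_eq_csInf_image]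
    rw [heq]
    exact Continuous.finset_inf'_apply hne (fun S _ => hcont S)
  · have heq : sigmaP p n k = fun _ => (0:ℝ) := by
      funext x
      rw [sigmaP, hset]
      rw [Finset.not_nonempty_iff_eq_empty] at hne
      simp [hne, Real.sInf_empty]
    rw [heq]; exact continuous_const

lemma measurable_sigmaTilde (p : ℝ) (hp : 0 < p) (n k : ℕ) :
    Measurable (sigmaTilde p n k) := by
  have h1 : Continuous (fun x : Fin n → ℝ => (∑ i, |x i| ^ p) ^ (1 / p)) :=
    (Real.continuous_rpow_const (by positivity)).comp
      (continuous_finset_sum _ fun i _ =>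
        (Real.continuous_rpow_const hp.le).comp (continuous_apply i).abs)
  exact (continuous_sigmaP p hp n k).measurable.div h1.measurable

/-- Corollary 1 (second part): if `f_{p,μ}(r₀) = 0` for some `r₀ ∈ (0,1]`, then for all
`ε, d ∈ (0,1)` we have `r_p(d,ε,μ) ≤ r̃⁺_p(d,ε,μ) ≤ r₀`. -/
theorem weak_rate_le_of_zero_strong_char
    (p : ℝ) (hp : 0 < p) (μ : Measure (ℕ → ℝ)) [IsProbabilityMeasure μ]
    (f : ℝ → ℝ) (hchar : StrongLpChar p μ f)
    (r₀ : ℝ) (hr₀ : r₀ ∈ Set.Ioc (0:ℝ) 1) (hf0 : f r₀ = 0) :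
    ∀ ε ∈ Set.Ioo (0:ℝ) 1, ∀ d ∈ Set.Ioo (0:ℝ) 1,
      rOp p μ d ε ≤ rTildePlus p μ d ε ∧ rTildePlus p μ d ε ≤ r₀ := by
  classical
  intro ε hε d hd
  obtain ⟨hr₀0, hr₀1⟩ := hr₀
  set kf : ℕ → ℕ := fun n => ⌈r₀ * n⌉₊ with hkf
  have hk1 : ∀ n : ℕ, 1 ≤ n → 1 ≤ kf n := by
    intro n hn
    have hn' : (0:ℝ) < n := by exact_mod_cast hn
    exact Nat.one_le_ceil_iff.mpr (by positivity)
  have hkn : ∀ n : ℕ, kf n ≤ n := by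
    intro n
    exact Nat.ceil_le.mpr (mul_le_of_le_one_left (Nat.cast_nonneg n) hr₀1)
  have hklim : Tendsto (fun n : ℕ => (kf n : ℝ) / n) atTop (𝓝 r₀) := by
    have h1 : Tendsto (fun n : ℕ => r₀ + 1 / (n:ℝ)) atTop (𝓝 r₀) := by
      simpa using tendsto_const_nhds.add (tendsto_one_div_atTop_nhds_zero_nat (𝕜 := ℝ))
    refine tendsto_of_tendsto_of_tendsto_of_le_of_le'
      (tendsto_const_nhds : Tendsto (fun _ : ℕ => r₀) atTop (𝓝 r₀)) h1 ?_ ?_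
    · filter_upwards [eventually_ge_atTop 1] with n hn
      have hn' : (0:ℝ) < n := by exact_mod_cast hn
      rw [le_div_iff₀ hn']
      exact Nat.le_ceil _
    · filter_upwards [eventually_ge_atTop 1] with n hn
      have hn' : (0:ℝ) < n := by exact_mod_cast hn
      rw [div_le_iff₀ hn']
      have h2 : (kf n : ℝ) ≤ r₀ * n + 1 :=
        (Nat.ceil_lt_add_one (by positivity : (0:ℝ) ≤ r₀ * n)).le
      have h3 : (r₀ + 1/(n:ℝ)) * n = r₀ * n + 1 := by field_simp
      linarith
  have hconv := hchar.2 r₀ ⟨hr₀0, hr₀1⟩ kf hklim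
  rw [hf0] at hconv
  have hGmeas : ∀ n : ℕ, Measurable (fun x : ℕ → ℝ => sigmaTilde p n (kf n) (proj n x)) :=
    fun n => (measurable_sigmaTilde p hp n (kf n)).comp (measurable_proj' n)
  have hTIM : TendstoInMeasure μ (fun n x => sigmaTilde p n (kf n) (proj n x)) atTop
      (fun _ => (0:ℝ)) :=
    tendstoInMeasure_of_tendsto_ae (fun n => (hGmeas n).aestronglyMeasurable) hconv
  have hbad := tendstoInMeasure_iff_dist.mp hTIM d hd.1
  have heps : ∀ᶠ n in atTop,
      μ {x | d ≤ dist (sigmaTilde p n (kf n) (proj n x)) ((fun _ => (0:ℝ)) x)}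
        ≤ ENNReal.ofReal ε :=
    (hbad.eventually_lt_const (by simp [ENNReal.ofReal_pos, hε.1])).mono fun n h => h.le
  have key : ∀ᶠ n in atTop, 1 - ε ≤ (lawn μ n (Ad p n (kf n) d)).toReal := by
    filter_upwards [heps] with n hbadn
    set L := lawn μ n (Ad p n (kf n) d) with hL
    have hmap_univ : lawn μ n (Set.univ) = 1 := by
      rw [lawn, Measure.map_apply (measurable_proj' n) MeasurableSet.univ]
      simp
    have hL1 : L ≤ 1 := le_trans (measure_mono (Set.subset_univ _)) hmap_univ.le
    have hLne : L ≠ ∞ := (hL1.trans_lt ENNReal.one_lt_top).ne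
    have hgood : μ (proj n ⁻¹' Ad p n (kf n) d) ≤ L :=
      Measure.le_map_apply (measurable_proj' n).aemeasurable _
    have hcover : (1:ℝ≥0∞) ≤ μ (proj n ⁻¹' Ad p n (kf n) d)
        + μ {x | d ≤ dist (sigmaTilde p n (kf n) (proj n x)) ((fun _ => (0:ℝ)) x)} := by
      have hu : (Set.univ : Set (ℕ → ℝ)) ⊆ (proj n ⁻¹' Ad p n (kf n) d)
          ∪ {x | d ≤ dist (sigmaTilde p n (kf n) (proj n x)) ((fun _ => (0:ℝ)) x)} := by
        intro x _
        by_cases h : sigmaTilde p n (kf n) (proj n x) ≤ d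
        · exact Or.inl h
        · refine Or.inr ?_
          push_neg at h
          have h' := h.le
          show d ≤ dist (sigmaTilde p n (kf n) (proj n x)) 0
          rw [Real.dist_eq, sub_zero]
          exact h'.trans (le_abs_self _)
      calc (1:ℝ≥0∞) = μ Set.univ := measure_univ.symm
        _ ≤ μ (_ ∪ _) := measure_mono hu
        _ ≤ _ + _ := measure_union_le _ _
    have h1 : (1:ℝ≥0∞) ≤ L + ENNReal.ofReal ε := hcover.trans (add_le_add hgood hbadn)
    have h2 : ENNReal.ofReal (1 - ε) ≤ L := by
      rw [ENNReal.ofReal_sub _ hε.1.le]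
      simp only [ENNReal.ofReal_one]
      exact tsub_le_iff_right.mpr h1
    exact (ENNReal.ofReal_le_iff_le_toReal hLne).mp h2
  have hmem : ∀ᶠ n in atTop, kf n ∈
      {k : ℕ | 1 ≤ k ∧ k ≤ n ∧ 1 - ε ≤ (lawn μ n (Ad p n k d)).toReal} := by
    filter_upwards [key, eventually_ge_atTop 1] with n h hn
    exact ⟨hk1 n hn, hkn n, h⟩
  have hkle : ∀ᶠ n in atTop, kappaP p μ d ε n ≤ kf n :=
    hmem.mono fun n h => Nat.sInf_le h
  have hkin : ∀ᶠ n in atTop,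
      1 - ε ≤ (lawn μ n (Ad p n (kappaP p μ d ε n) d)).toReal :=
    hmem.mono fun n h => (Nat.sInf_mem (⟨kf n, h⟩ : Set.Nonempty _)).2.2
  have hub : ∀ n : ℕ, (kappaP p μ d ε n : ℝ) / n ≤ 1 := by
    intro n
    rcases Nat.eq_zero_or_pos n with h0 | hn
    · simp [h0]
    · rw [div_le_one (by exact_mod_cast hn)]
      have hle : kappaP p μ d ε n ≤ n := by
        by_cases hne : {k : ℕ | 1 ≤ k ∧ k ≤ n ∧
            1 - ε ≤ (lawn μ n (Ad p n k d)).toReal}.Nonempty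
        · exact (Nat.sInf_mem hne).2.1
        · rw [kappaP, Set.not_nonempty_iff_eq_empty.mp hne, Nat.sInf_empty]
          exact Nat.zero_le n
      exact_mod_cast hle
  have hlb : ∀ n : ℕ, (0:ℝ) ≤ (kappaP p μ d ε n : ℝ) / n := fun n => by positivity
  have hbdd_above : IsBoundedUnder (· ≤ ·) atTop (fun n => (kappaP p μ d ε n : ℝ) / n) :=
    Filter.isBoundedUnder_of ⟨1, hub⟩
  have hbdd_below : IsBoundedUnder (· ≥ ·) atTop (fun n => (kappaP p μ d ε n : ℝ) / n) :=
    Filter.isBoundedUnder_of ⟨0, hlb⟩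
  have hcob_le : IsCoboundedUnder (· ≤ ·) atTop (fun n => (kappaP p μ d ε n : ℝ) / n) :=
    hbdd_below.isCoboundedUnder_le
  have hle_r₀ : rTildePlus p μ d ε ≤ r₀ := by
    have hev : (fun n => (kappaP p μ d ε n : ℝ) / n) ≤ᶠ[atTop]
        (fun n => (kf n : ℝ) / n) := by
      filter_upwards [hkle, eventually_ge_atTop 1] with n h hn
      have hn' : (0:ℝ) < n := by exact_mod_cast hn
      have hc : (kappaP p μ d ε n : ℝ) ≤ (kf n : ℝ) := by exact_mod_cast h
      gcongr
    have := Filter.limsup_le_limsup hev hcob_le hklim.isBoundedUnder_le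
    rw [rTildePlus]
    exact this.trans_eq hklim.limsup_eq
  have h0le : (0:ℝ) ≤ rTildePlus p μ d ε :=
    Filter.le_limsup_of_frequently_le
      ((Filter.Eventually.of_forall hlb).frequently) hbdd_above
  have hle1 : rTildePlus p μ d ε ≤ 1 :=
    Filter.limsup_le_of_le hcob_le (Filter.Eventually.of_forall hub)
  have htoReal_le1 : ∀ n : ℕ, (lawn μ n (Ad p n (kappaP p μ d ε n) d)).toReal ≤ 1 := by
    intro n
    have hmap_univ : lawn μ n (Set.univ) = 1 := by
      rw [lawn, Measure.map_apply (measurable_proj' n) MeasurableSet.univ]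
      simp
    have h1 : lawn μ n (Ad p n (kappaP p μ d ε n) d) ≤ 1 :=
      le_trans (measure_mono (Set.subset_univ _)) hmap_univ.le
    simpa using ENNReal.toReal_mono ENNReal.one_ne_top h1
  have hcob_ge : IsCoboundedUnder (· ≥ ·) atTop
      (fun n => (lawn μ n (Ad p n (kappaP p μ d ε n) d)).toReal) :=
    IsBoundedUnder.isCoboundedUnder_ge (Filter.isBoundedUnder_of ⟨1, htoReal_le1⟩)
  have hach : Achievable p μ d ε (rTildePlus p μ d ε) :=
    ⟨kappaP p μ d ε, le_refl _, Filter.le_liminf_of_le hcob_ge hkin⟩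
  refine ⟨?_, hle_r₀⟩
  exact csInf_le ⟨0, fun r hr => hr.1.1⟩ ⟨⟨h0le, hle1⟩, hach⟩


end
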